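/- arXiv:1902.09999 — 3 statements merged into one kernel-verified Lean document; each statement's English description precedes it below -/
import Mathlib

section
/- Let k > 0, q_f > 0 and q_c be real numbers with q_f + k − q_c > 0. Let σ_f and σ_n be 1×2 real row vectors, σ_u = σ_n − σ_f, and let Σ be the 2×2 real matrix whose first row is σ_u and whose second row is σ_n. Let Θ = [[q_f, −q_c], [q_f, k − q_c]] and define the symmetric 2×2 matrix ρ by ρ₁₁ = ((kσ_u + q_c σ_f)(kσ_u + q_c σ_f)ᵀ + q_f·k·σ_u σ_uᵀ)/(2 q_f k (q_f + k − q_c)), ρ₁₂ = ρ₂₁ = ((q_c − k)·σ_f σ_fᵀ + k·σ_n σ_nᵀ)/(2k(q_f + k − q_c)), ρ₂₂ = (q_f·σ_f σ_fᵀ + k·σ_n σ_nᵀ)/(2k(q_f + k − q_c)). Then Θρ + ρΘᵀ = ΣΣᵀ. -/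
set_option maxHeartbeats 2000000


open Matrix

/-- Proposition 2 (algebraic core): the claimed asymptotic covariance matrix `ρ` of the
stationary Ornstein–Uhlenbeck process `dX = −ΘX dt + Σ dW` solves the Lyapunov equation
`Θρ + ρΘᵀ = ΣΣᵀ`. -/
theorem stmt_4 (k q_f q_c : ℝ) (hk : 0 < k) (hqf : 0 < q_f)
    (hstab : 0 < q_f + k - q_c)
    (σ_f σ_n : Matrix (Fin 1) (Fin 2) ℝ) :
    let σ_u : Matrix (Fin 1) (Fin 2) ℝ := σ_n - σ_f
    let Θ : Matrix (Fin 2) (Fin 2) ℝ := !![q_f, -q_c; q_f, k - q_c]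
    let Sg : Matrix (Fin 2) (Fin 2) ℝ :=
      !![σ_u 0 0, σ_u 0 1; σ_n 0 0, σ_n 0 1]
    let ρ11 : ℝ :=
      (((k • σ_u + q_c • σ_f) * (k • σ_u + q_c • σ_f)ᵀ) 0 0
          + q_f * k * ((σ_u * σ_uᵀ) 0 0)) / (2 * q_f * k * (q_f + k - q_c))
    let ρ12 : ℝ :=
      ((q_c - k) * ((σ_f * σ_fᵀ) 0 0) + k * ((σ_n * σ_nᵀ) 0 0))
        / (2 * k * (q_f + k - q_c))
    let ρ22 : ℝ :=
      (q_f * ((σ_f * σ_fᵀ) 0 0) + k * ((σ_n * σ_nᵀ) 0 0))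
        / (2 * k * (q_f + k - q_c))
    let ρ : Matrix (Fin 2) (Fin 2) ℝ := !![ρ11, ρ12; ρ12, ρ22]
    Θ * ρ + ρ * Θᵀ = Sg * Sgᵀ := by
  intro σ_u Θ Sg ρ11 ρ12 ρ22 ρ
  have hk' : k ≠ 0 := hk.ne'
  have hqf' : q_f ≠ 0 := hqf.ne'
  have hs' : q_f + k - q_c ≠ 0 := hstab.ne'
  ext i j
  fin_cases i <;> fin_cases j <;>
    simp [ρ, ρ11, ρ12, ρ22, Θ, Sg, σ_u, Matrix.mul_apply, Matrix.add_apply,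
      Fin.sum_univ_succ, Matrix.transpose_apply, Matrix.smul_apply, Matrix.sub_apply, Matrix.vecHead, Matrix.vecTail, Matrix.cons_val_zero, Matrix.cons_val_one, Matrix.head_cons, Function.comp, Matrix.vecMul, dotProduct] <;>
    field_simp <;> ring
end

section
/- Let k > 0 and q_c ≥ 0 be real numbers, and let A ≥ 0 and B > 0 be real numbers. Define V_u(q_f) = (A + B·q_f)/(2·q_f·k·(q_f + k − q_c)). Then for all real q_f1, q_f2 with 0 < q_f1 < q_f2 and q_f1 + k − q_c > 0, we have V_u(q_f2) < V_u(q_f1). In particular, taking A = (kσ_u + q_c σ_f)(kσ_u + q_c σ_f)ᵀ and B = k·σ_u σ_uᵀ for 1×2 real row vectors σ_f, σ_n with σ_u = σ_n − σ_f ≠ 0, the asymptotic variance of price dislocation V_u(q_f) = ((kσ_u + q_cσ_f)(kσ_u + q_cσ_f)ᵀ + q_f k σ_uσ_uᵀ)/(2 q_f k (q_f + k − q_c)) is strictly decreasing in q_f on this region. -/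
open Matrix

lemma entry_sq (M : Matrix (Fin 1) (Fin 2) ℝ) :
    (M * Mᵀ) 0 0 = M 0 0 ^ 2 + M 0 1 ^ 2 := by
  simp [Matrix.mul_apply, Fin.sum_univ_two, Matrix.transpose_apply, sq]

lemma entry_nonneg (M : Matrix (Fin 1) (Fin 2) ℝ) : 0 ≤ (M * Mᵀ) 0 0 := by
  rw [entry_sq]; positivity

lemma entry_pos (M : Matrix (Fin 1) (Fin 2) ℝ) (hM : M ≠ 0) : 0 < (M * Mᵀ) 0 0 := by
  rcases (entry_nonneg M).lt_or_eq with h | h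
  · exact h
  · exfalso; apply hM
    rw [entry_sq] at h
    have h0 : M 0 0 = 0 := by nlinarith [sq_nonneg (M 0 0), sq_nonneg (M 0 1)]
    have h1 : M 0 1 = 0 := by nlinarith [sq_nonneg (M 0 0), sq_nonneg (M 0 1)]
    ext i j
    fin_cases i <;> fin_cases j <;> simpa [h0, h1]

/-- The asymptotic variance of price dislocation
`V_u(q_f) = (A + B q_f)/(2 q_f k (q_f + k − q_c))` is strictly decreasing in the
fundamentalists' strength `q_f` (on the stability region), in general for `A ≥ 0`,
`B > 0`, and in particular for `A = (kσ_u + q_cσ_f)(kσ_u + q_cσ_f)ᵀ`,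
`B = k σ_u σ_uᵀ` with `σ_u = σ_n − σ_f ≠ 0`. -/
theorem stmt_13 (k q_c : ℝ) (hk : 0 < k) (hqc : 0 ≤ q_c) :
    (∀ A B : ℝ, 0 ≤ A → 0 < B →
      ∀ q_f1 q_f2 : ℝ, 0 < q_f1 → q_f1 < q_f2 → 0 < q_f1 + k - q_c →
        (A + B * q_f2) / (2 * q_f2 * k * (q_f2 + k - q_c))
          < (A + B * q_f1) / (2 * q_f1 * k * (q_f1 + k - q_c))) ∧
    (∀ σ_f σ_n : Matrix (Fin 1) (Fin 2) ℝ, σ_n - σ_f ≠ 0 →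
      ∀ q_f1 q_f2 : ℝ, 0 < q_f1 → q_f1 < q_f2 → 0 < q_f1 + k - q_c →
        (((k • (σ_n - σ_f) + q_c • σ_f) * (k • (σ_n - σ_f) + q_c • σ_f)ᵀ) 0 0
            + q_f2 * k * (((σ_n - σ_f) * (σ_n - σ_f)ᵀ) 0 0))
            / (2 * q_f2 * k * (q_f2 + k - q_c))
          < (((k • (σ_n - σ_f) + q_c • σ_f) * (k • (σ_n - σ_f) + q_c • σ_f)ᵀ) 0 0
            + q_f1 * k * (((σ_n - σ_f) * (σ_n - σ_f)ᵀ) 0 0))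
            / (2 * q_f1 * k * (q_f1 + k - q_c))) := by
  have gen : ∀ A B : ℝ, 0 ≤ A → 0 < B →
      ∀ q_f1 q_f2 : ℝ, 0 < q_f1 → q_f1 < q_f2 → 0 < q_f1 + k - q_c →
        (A + B * q_f2) / (2 * q_f2 * k * (q_f2 + k - q_c))
          < (A + B * q_f1) / (2 * q_f1 * k * (q_f1 + k - q_c)) := by
    intro A B hA hB q1 q2 h1 h12 hs
    have hs2 : 0 < q2 + k - q_c := by linarith
    have hq2 : 0 < q2 := h1.trans h12
    have hd1 : 0 < 2 * q1 * k * (q1 + k - q_c) := by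
      apply mul_pos (by positivity) hs
    have hd2 : 0 < 2 * q2 * k * (q2 + k - q_c) := by
      exact mul_pos (by positivity) hs2
    rw [div_lt_div_iff₀ hd2 hd1]
    have ha : 0 ≤ k * (A * ((q2 - q1) * (q2 + q1 + k - q_c))) :=
      mul_nonneg hk.le (mul_nonneg hA (mul_nonneg (by linarith) (by linarith)))
    have hb : 0 < k * (B * (q1 * q2 * (q2 - q1))) :=
      mul_pos hk (mul_pos hB (mul_pos (mul_pos h1 hq2) (by linarith)))
    nlinarith [ha, hb]
  refine ⟨gen, ?_⟩
  intro σ_f σ_n hne q1 q2 h1 h12 hs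
  set M := k • (σ_n - σ_f) + q_c • σ_f
  set N := σ_n - σ_f
  have hA : 0 ≤ (M * Mᵀ) 0 0 := entry_nonneg M
  have hX : 0 < (N * Nᵀ) 0 0 := entry_pos N hne
  have hB : 0 < k * ((N * Nᵀ) 0 0) := mul_pos hk hX
  have h := gen ((M * Mᵀ) 0 0) (k * ((N * Nᵀ) 0 0)) hA hB q1 q2 h1 h12 hs
  convert h using 3 <;> ring
end

section
/- Let k > 0 and q_f > 0 be real numbers, and let σ_f, σ_n be 1×2 real row vectors with σ_u = σ_n − σ_f satisfying σ_u σ_uᵀ > 0 and σ_u σ_fᵀ ≥ 0. Define V_u(q_c) = ((kσ_u + q_cσ_f)(kσ_u + q_cσ_f)ᵀ + q_f·k·σ_uσ_uᵀ)/(2·q_f·k·(q_f + k − q_c)). Then for all real q_c1, q_c2 with 0 ≤ q_c1 < q_c2 < q_f + k, we have V_u(q_c1) < V_u(q_c2). -/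
open Matrix

lemma aux_key (a b c k q_f q1 q2 : ℝ) (hk : 0 < k) (hqf : 0 < q_f)
    (ha : 0 < a) (hb : 0 ≤ b) (hc : 0 ≤ c) (h1 : 0 ≤ q1) (h12 : q1 < q2)
    (h2 : q2 < q_f + k) :
    (k^2*a + 2*k*q1*b + q1^2*c + q_f*k*a) / (2*q_f*k*(q_f+k-q1))
      < (k^2*a + 2*k*q2*b + q2^2*c + q_f*k*a) / (2*q_f*k*(q_f+k-q2)) := by
  have hs1 : 0 < q_f + k - q1 := by linarith
  have hs2 : 0 < q_f + k - q2 := by linarith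
  have hd1 : 0 < 2*q_f*k*(q_f+k-q1) := by positivity
  have hd2 : 0 < 2*q_f*k*(q_f+k-q2) := by positivity
  rw [div_lt_div_iff₀ hd1 hd2]
  have h21 : 0 < q2 - q1 := by linarith
  have key : (k^2*a + 2*k*q2*b + q2^2*c + q_f*k*a) * (q_f+k-q1)
      - (k^2*a + 2*k*q1*b + q1^2*c + q_f*k*a) * (q_f+k-q2)
      = (k^2*a + q_f*k*a)*(q2-q1) + 2*k*b*(q_f+k)*(q2-q1)
        + c*(q2-q1)*((q_f+k-q2)*q1 + (q_f+k)*q2) := by ring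
  have hpos : 0 < (k^2*a + q_f*k*a)*(q2-q1) + 2*k*b*(q_f+k)*(q2-q1)
        + c*(q2-q1)*((q_f+k-q2)*q1 + (q_f+k)*q2) := by
    have t1 : 0 < (k^2*a + q_f*k*a)*(q2-q1) := by positivity
    have t2 : 0 ≤ 2*k*b*(q_f+k)*(q2-q1) := by
      have : (0:ℝ) < q_f + k := by linarith
      positivity
    have t3 : 0 ≤ c*(q2-q1)*((q_f+k-q2)*q1 + (q_f+k)*q2) := by
      apply mul_nonneg (mul_nonneg hc h21.le)
      have hq2 : 0 ≤ q2 := by linarith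
      have : (0:ℝ) < q_f + k := by linarith
      positivity
    linarith
  have := key ▸ hpos
  nlinarith [mul_pos (mul_pos (mul_pos (by norm_num : (0:ℝ)<2) hqf) hk) hs1]

/-- The asymptotic variance of price dislocation
`V_u(q_c) = ((kσ_u + q_cσ_f)(kσ_u + q_cσ_f)ᵀ + q_f k σ_uσ_uᵀ)/(2 q_f k (q_f + k − q_c))`
is strictly increasing in the chartists' strength `q_c` on `[0, q_f + k)`,
provided `σ_u σ_uᵀ > 0` and `σ_u σ_fᵀ ≥ 0`. -/
theorem stmt_15 (k q_f : ℝ) (hk : 0 < k) (hqf : 0 < q_f)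
    (σ_f σ_n : Matrix (Fin 1) (Fin 2) ℝ)
    (huu : 0 < (((σ_n - σ_f) * (σ_n - σ_f)ᵀ) 0 0))
    (huf : 0 ≤ (((σ_n - σ_f) * σ_fᵀ) 0 0)) :
    ∀ q_c1 q_c2 : ℝ, 0 ≤ q_c1 → q_c1 < q_c2 → q_c2 < q_f + k →
      (((k • (σ_n - σ_f) + q_c1 • σ_f) * (k • (σ_n - σ_f) + q_c1 • σ_f)ᵀ) 0 0
          + q_f * k * (((σ_n - σ_f) * (σ_n - σ_f)ᵀ) 0 0))
          / (2 * q_f * k * (q_f + k - q_c1))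
        < (((k • (σ_n - σ_f) + q_c2 • σ_f) * (k • (σ_n - σ_f) + q_c2 • σ_f)ᵀ) 0 0
          + q_f * k * (((σ_n - σ_f) * (σ_n - σ_f)ᵀ) 0 0))
          / (2 * q_f * k * (q_f + k - q_c2)) := by
  intro q1 q2 h1 h12 h2
  have huu' : 0 < (σ_n 0 0 - σ_f 0 0)^2 + (σ_n 0 1 - σ_f 0 1)^2 := by
    simpa [Matrix.mul_apply, Fin.sum_univ_two, sq] using huu
  have huf' : 0 ≤ (σ_n 0 0 - σ_f 0 0)*(σ_f 0 0) + (σ_n 0 1 - σ_f 0 1)*(σ_f 0 1) := by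
    simpa [Matrix.mul_apply, Fin.sum_univ_two] using huf
  have key := aux_key ((σ_n 0 0 - σ_f 0 0)^2 + (σ_n 0 1 - σ_f 0 1)^2)
    ((σ_n 0 0 - σ_f 0 0)*(σ_f 0 0) + (σ_n 0 1 - σ_f 0 1)*(σ_f 0 1))
    ((σ_f 0 0)^2 + (σ_f 0 1)^2) k q_f q1 q2 hk hqf
    huu' huf' (by positivity) h1 h12 h2
  have e1 : (((k • (σ_n - σ_f) + q1 • σ_f) * (k • (σ_n - σ_f) + q1 • σ_f)ᵀ) 0 0
      + q_f * k * (((σ_n - σ_f) * (σ_n - σ_f)ᵀ) 0 0))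
      = k^2*((σ_n 0 0 - σ_f 0 0)^2 + (σ_n 0 1 - σ_f 0 1)^2)
        + 2*k*q1*((σ_n 0 0 - σ_f 0 0)*(σ_f 0 0) + (σ_n 0 1 - σ_f 0 1)*(σ_f 0 1))
        + q1^2*((σ_f 0 0)^2 + (σ_f 0 1)^2)
        + q_f*k*((σ_n 0 0 - σ_f 0 0)^2 + (σ_n 0 1 - σ_f 0 1)^2) := by
    simp [Matrix.mul_apply, Fin.sum_univ_two]
    ring
  have e2 : (((k • (σ_n - σ_f) + q2 • σ_f) * (k • (σ_n - σ_f) + q2 • σ_f)ᵀ) 0 0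
      + q_f * k * (((σ_n - σ_f) * (σ_n - σ_f)ᵀ) 0 0))
      = k^2*((σ_n 0 0 - σ_f 0 0)^2 + (σ_n 0 1 - σ_f 0 1)^2)
        + 2*k*q2*((σ_n 0 0 - σ_f 0 0)*(σ_f 0 0) + (σ_n 0 1 - σ_f 0 1)*(σ_f 0 1))
        + q2^2*((σ_f 0 0)^2 + (σ_f 0 1)^2)
        + q_f*k*((σ_n 0 0 - σ_f 0 0)^2 + (σ_n 0 1 - σ_f 0 1)^2) := by
    simp [Matrix.mul_apply, Fin.sum_univ_two]
    ring
  rw [e1, e2]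
  exact key
end
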